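/- Let R be a Noetherian domain and I ⊆ R a nonzero proper ideal. Define the graded families a_• and b_• by a_i = I^i for all i, and b_i = I for i ≠ 2 with b_2 = I^2. Then for every n ≥ 5, the asymptotic resurgence of a_• with respect to the n-th truncation of b_• is ρ̂(a_•, b_{n,•}) = 1/n. -/

import Mathlib

open Filter

noncomputable section

/-- The asymptotic resurgence
`ρ̂(a_•, b_•) = sup{s/r : s,r ≥ 1, a_{st} ⊄ b_{rt} for all t ≫ 0}` (in `EReal`, so that the
supremum of the empty set is `⊥ = -∞`). -/
def asymptoticResurgence {R : Type*} [CommSemiring R] (a b : ℕ → Ideal R) : EReal :=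
  sSup {x : EReal | ∃ s r : ℕ, 1 ≤ s ∧ 1 ≤ r ∧
    (∀ᶠ t in atTop, ¬ (a (s * t) ≤ b (r * t))) ∧
    x = (((s : ℝ) / (r : ℝ) : ℝ) : EReal)}

/-- The `n`-th truncation of a graded family: `a_{n,k} = a_k` for `k ≤ n`, and
`a_{n,k} = Σ_{i,j>0, i+j=k} a_{n,i}·a_{n,j}` for `k > n`. -/
def truncation {R : Type*} [CommSemiring R] (a : ℕ → Ideal R) (n : ℕ) (k : ℕ) : Ideal R :=
  Nat.strongRecOn k fun k ih =>
    if k ≤ n then a k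
    else ⨆ i : Fin k, ⨆ h : 0 < i.val,
      ih i.val i.isLt *
      ih (k - i.val) (Nat.sub_lt (Nat.lt_of_le_of_lt (Nat.zero_le _) i.isLt) h)

/-- Recursion equation for `truncation`. -/
lemma truncation_eq {R : Type*} [CommSemiring R] (b : ℕ → Ideal R) (n k : ℕ) :
    truncation b n k = if k ≤ n then b k
      else ⨆ i : Fin k, ⨆ _ : 0 < i.val,
        truncation b n i.val * truncation b n (k - i.val) := by
  rw [truncation, Nat.strongRecOn_eq]
  rfl

/-- The exponent function for the truncated family. -/
def gdegAux (n k : ℕ) : ℕ := if k = 2 then 2 else (k + n - 1) / n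

lemma gdegAux_small {n k : ℕ} (hn : 5 ≤ n) (hk : 1 ≤ k) (hkn : k ≤ n) (h2 : k ≠ 2) :
    gdegAux n k = 1 := by
  have hn0 : 0 < n := by omega
  rw [gdegAux, if_neg h2]
  refine le_antisymm ((Nat.div_le_iff_le_mul_add_pred hn0).2 (by omega))
    ((Nat.le_div_iff_mul_le hn0).2 (by omega))

lemma gdegAux_le_mul {n k : ℕ} (hn : 5 ≤ n) (hk : 1 ≤ k) : k ≤ n * gdegAux n k := by
  have hn0 : 0 < n := by omega
  rw [gdegAux]
  by_cases h2 : k = 2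
  · rw [if_pos h2]; omega
  · rw [if_neg h2]
    have h1 := Nat.div_add_mod (k + n - 1) n
    have hmlt := Nat.mod_lt (k + n - 1) hn0
    generalize n * ((k + n - 1) / n) = A at *
    omega

lemma gdegAux_pos {n k : ℕ} (hn : 5 ≤ n) (hk : 1 ≤ k) : 1 ≤ gdegAux n k := by
  have := gdegAux_le_mul hn hk
  by_contra h
  have h0 : gdegAux n k = 0 := by omega
  rw [h0, Nat.mul_zero] at this
  omega

lemma gdegAux_superadd {n i j : ℕ} (hn : 5 ≤ n) (hi : 1 ≤ i) (hj : 1 ≤ j) :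
    gdegAux n (i + j) ≤ gdegAux n i + gdegAux n j := by
  have hn0 : 0 < n := by omega
  have hgi := gdegAux_pos hn hi
  have hgj := gdegAux_pos hn hj
  have hle : i + j ≤ n * (gdegAux n i + gdegAux n j) := by
    rw [Nat.mul_add]
    exact Nat.add_le_add (gdegAux_le_mul hn hi) (gdegAux_le_mul hn hj)
  rw [gdegAux]
  by_cases h2 : i + j = 2
  · rw [if_pos h2]; omega
  · rw [if_neg h2]
    refine (Nat.div_le_iff_le_mul_add_pred hn0).2 ?_
    omega

lemma gdegAux_achieve {n k : ℕ} (hn : 5 ≤ n) (hk : n < k) :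
    ∃ i, 1 ≤ i ∧ i < k ∧ gdegAux n i + gdegAux n (k - i) = gdegAux n k := by
  have hn0 : 0 < n := by omega
  have hgk : gdegAux n k = (k - 1) / n + 1 := by
    rw [gdegAux, if_neg (by omega)]
    have : k + n - 1 = (k - 1) + n := by omega
    rw [this, Nat.add_div_right _ hn0]
  by_cases h2 : k = n + 2
  · refine ⟨3, by omega, by omega, ?_⟩
    have e1 : gdegAux n 3 = 1 := gdegAux_small hn (by omega) (by omega) (by omega)
    have e2 : gdegAux n (k - 3) = 1 :=
      gdegAux_small hn (by omega) (by omega) (by omega)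
    have e3 : (k - 1) / n = 1 := by
      refine le_antisymm ((Nat.div_le_iff_le_mul_add_pred hn0).2 (by omega))
        ((Nat.le_div_iff_mul_le hn0).2 (by omega))
    rw [e1, e2, hgk, e3]
  · refine ⟨n, by omega, by omega, ?_⟩
    have e1 : gdegAux n n = 1 := gdegAux_small hn (by omega) le_rfl (by omega)
    have e2 : gdegAux n (k - n) = (k - 1) / n := by
      rw [gdegAux, if_neg (by omega)]
      congr 1
      omega
    rw [e1, e2, hgk, Nat.add_comm]

/-- In a Noetherian domain, powers of a nonzero proper ideal are strictly decreasing. -/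
lemma pow_le_pow_iff_aux {R : Type*} [CommRing R] [IsDomain R] [IsNoetherianRing R]
    {I : Ideal R} (hI0 : I ≠ ⊥) (hI1 : I ≠ ⊤) {c d : ℕ} :
    I ^ c ≤ I ^ d ↔ d ≤ c := by
  refine ⟨fun h => ?_, fun h => Ideal.pow_le_pow_right h⟩
  by_contra hd
  push_neg at hd
  have heq : I ^ c = I ^ (c + 1) :=
    le_antisymm (le_trans h (Ideal.pow_le_pow_right hd)) (Ideal.pow_le_pow_right (Nat.le_succ c))
  have hall : ∀ m, I ^ c = I ^ (c + m) := by
    intro m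
    induction m with
    | zero => rfl
    | succ m ih => rw [← Nat.add_assoc, pow_succ, ← ih, ← pow_succ, ← heq]
  have hbot : I ^ c ≤ ⊥ := by
    rw [← Ideal.iInf_pow_eq_bot_of_isDomain I hI1]
    refine le_iInf fun m => ?_
    calc I ^ c = I ^ (c + m) := hall m
    _ ≤ I ^ m := Ideal.pow_le_pow_right (Nat.le_add_left m c)
  have hzero : I ^ c = ⊥ := le_bot_iff.1 hbot
  rcases Nat.eq_zero_or_pos c with rfl | hc
  · rw [pow_zero, Ideal.one_eq_top] at hzero
    exact one_ne_zero ((Submodule.mem_bot R).1 (hzero ▸ Submodule.mem_top))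
  · exact hI0 (pow_eq_zero_iff hc.ne' |>.1 hzero)

lemma truncation_pow {R : Type*} [CommRing R] [IsDomain R] [IsNoetherianRing R]
    {I : Ideal R} {b : ℕ → Ideal R} {n : ℕ} (hn : 5 ≤ n)
    (hB : ∀ i : ℕ, 1 ≤ i → b i = if i = 2 then I ^ 2 else I) :
    ∀ k, 1 ≤ k → truncation b n k = I ^ gdegAux n k := by
  intro k
  induction k using Nat.strongRecOn with
  | _ k ih =>
  intro hk
  rw [truncation_eq]
  by_cases hkn : k ≤ n
  · rw [if_pos hkn, hB k hk]
    by_cases h2 : k = 2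
    · subst h2; rw [if_pos rfl, gdegAux, if_pos rfl]
    · rw [if_neg h2, gdegAux_small hn hk hkn h2, pow_one]
  · rw [if_neg hkn]
    push_neg at hkn
    apply le_antisymm
    · refine iSup_le fun i => iSup_le fun hi => ?_
      have hik : (i : ℕ) < k := i.isLt
      rw [ih i hik hi, ih (k - i) (by omega) (by omega), ← pow_add]
      apply Ideal.pow_le_pow_right
      have h := gdegAux_superadd hn hi (j := k - i) (by omega)
      rwa [Nat.add_sub_cancel' hik.le] at h
    · obtain ⟨i, h1, h2, h3⟩ := gdegAux_achieve hn hkn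
      have e : I ^ gdegAux n k = truncation b n i * truncation b n (k - i) := by
        rw [ih i h2 h1, ih (k - i) (by omega) (by omega), ← pow_add, h3]
      rw [e]
      exact le_iSup_of_le ⟨i, h2⟩ (le_iSup_of_le h1 le_rfl)

/-- from Example `ex.rhoTruncation`. Let `R` be a Noetherian domain and
`I ⊆ R` a nonzero proper ideal. Let `a_i = Iⁱ`, and `b_i = I` for `i ≠ 2`, `b_2 = I²`. Then
for every `n ≥ 5`, `ρ̂(a_•, b_{n,•}) = 1/n`. -/
theorem asymptoticResurgence_truncation_example
    {R : Type*} [CommRing R] [IsDomain R] [IsNoetherianRing R]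
    (I : Ideal R) (hI0 : I ≠ ⊥) (hI1 : I ≠ ⊤)
    (a b : ℕ → Ideal R)
    (hA : ∀ i : ℕ, a i = I ^ i)
    (hB : ∀ i : ℕ, 1 ≤ i → b i = if i = 2 then I ^ 2 else I) :
    ∀ n : ℕ, 5 ≤ n →
      asymptoticResurgence a (truncation b n) = (((n : ℝ)⁻¹ : ℝ) : EReal) := by
  intro n hn
  have hn0 : 0 < n := by omega
  have hnR : (0 : ℝ) < n := by exact_mod_cast hn0
  have hc := truncation_pow (I := I) (b := b) hn hB
  have hpow : ∀ {c d : ℕ}, I ^ c ≤ I ^ d ↔ d ≤ c := fun {c d} => pow_le_pow_iff_aux hI0 hI1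
  rw [asymptoticResurgence]
  -- membership of the approximating sequence
  have hmem : ∀ s : ℕ, 1 ≤ s →
      (((s : ℝ) / ((n * s + 1 : ℕ) : ℝ) : ℝ) : EReal) ∈
        {x : EReal | ∃ s r : ℕ, 1 ≤ s ∧ 1 ≤ r ∧
          (∀ᶠ t in atTop, ¬ (a (s * t) ≤ truncation b n (r * t))) ∧
          x = (((s : ℝ) / (r : ℝ) : ℝ) : EReal)} := by
    intro s hs
    refine ⟨s, n * s + 1, hs, by omega, ?_, rfl⟩
    filter_upwards [eventually_ge_atTop 1] with t ht
    have hrt3 : 3 ≤ (n * s + 1) * t := by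
      calc 3 ≤ 6 * 1 := by omega
      _ ≤ (n * s + 1) * t := Nat.mul_le_mul (by nlinarith) ht
    rw [hA, hc _ (by omega), hpow]
    intro hle
    rw [gdegAux, if_neg (by omega)] at hle
    have hdiv : s * t + 1 ≤ ((n * s + 1) * t + n - 1) / n := by
      refine (Nat.le_div_iff_mul_le hn0).2 ?_
      have e1 : (s * t + 1) * n = n * s * t + n := by ring
      have e2 : (n * s + 1) * t = n * s * t + t := by ring
      rw [e1, e2]
      generalize n * s * t = A
      omega
    omega
  apply le_antisymm
  · apply sSup_le
    rintro x ⟨s, r, hs, hr, hev, rfl⟩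
    have hns : n * s < r := by
      obtain ⟨t, ht3, ht⟩ := ((eventually_ge_atTop 3).and hev).exists
      have hrt1 : 1 ≤ r * t := by
        calc 1 ≤ 1 * 3 := by omega
        _ ≤ r * t := Nat.mul_le_mul hr ht3
      rw [hA, hc _ hrt1, hpow] at ht
      push_neg at ht
      have hrt3 : 3 ≤ r * t := by
        calc 3 = 1 * 3 := by omega
        _ ≤ r * t := Nat.mul_le_mul hr ht3
      rw [gdegAux, if_neg (by omega)] at ht
      have h5 : (s * t + 1) * n ≤ r * t + n - 1 := (Nat.le_div_iff_mul_le hn0).1 ht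
      have h6 : n * s * t < r * t := by
        have e1 : (s * t + 1) * n = n * s * t + n := by ring
        rw [e1] at h5
        generalize n * s * t = A at h5 ⊢
        generalize r * t = B at h5 ⊢
        omega
      exact Nat.lt_of_mul_lt_mul_right h6
    rw [EReal.coe_le_coe_iff, inv_eq_one_div,
      div_le_div_iff₀ (by exact_mod_cast Nat.lt_of_lt_of_le Nat.zero_lt_one hr) hnR]
    have : ((n * s : ℕ) : ℝ) ≤ (r : ℝ) := by exact_mod_cast hns.le
    push_cast at this ⊢
    nlinarith
  · rw [le_sSup_iff]
    intro ub hub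
    have key : ∀ s : ℕ, 1 ≤ s →
        (((s : ℝ) / ((n * s + 1 : ℕ) : ℝ) : ℝ) : EReal) ≤ ub := fun s hs => hub (hmem s hs)
    induction ub with
    | bot =>
      have h1 := key 1 le_rfl
      rw [le_bot_iff] at h1
      exact absurd h1 (EReal.coe_ne_bot _)
    | coe y =>
      rw [EReal.coe_le_coe_iff]
      by_contra hy
      push_neg at hy
      have hyn : y * n < 1 := by
        have := mul_lt_mul_of_pos_right hy hnR
        rwa [inv_mul_cancel₀ hnR.ne'] at this
      have hd : 0 < 1 - y * n := by linarith
      obtain ⟨s₀, hs₀⟩ := exists_nat_gt (y / (1 - y * n))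
      set s : ℕ := s₀ + 1 with hs_def
      have h1 : y / (1 - y * n) < (s : ℝ) := by push_cast [hs_def]; linarith
      have h2 : y < (s : ℝ) * (1 - y * n) := (div_lt_iff₀ hd).1 h1
      have h3 : y * ((n : ℝ) * s + 1) < s := by nlinarith
      have h5 := key s (by omega)
      rw [EReal.coe_le_coe_iff] at h5
      push_cast at h5
      have hpos : (0 : ℝ) < (n : ℝ) * s + 1 := by positivity
      have h4 : y < (s : ℝ) / ((n : ℝ) * s + 1) := (lt_div_iff₀ hpos).2 h3
      push_cast [hs_def] at h4 h5
      linarith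
    | top => exact le_top

end
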